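/- arXiv:2305.12601 — 2 statements merged into one kernel-verified Lean document; each statement's English description precedes it below -/
import Mathlib

section
/- If a star-free expression E of size n + 1 denotes a non-empty language, then that language contains a word of length at most tower(n), where tower(0) = 1 and tower(k+1) = 2^tower(k). -/
/-- Star-free expressions over an alphabet `α`. -/
inductive SF (α : Type*) : Type _
  | empty : SF α
  | eps : SF α
  | ltr : α → SF α
  | union : SF α → SF α → SF α
  | conc : SF α → SF α → SF α
  | compl : SF α → SF α

namespace SF

variable {α : Type*}

/-- The language denoted by a star-free expression. -/
def lang : SF α → Set (List α)
  | empty => ∅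
  | eps => {[]}
  | ltr a => {[a]}
  | union e f => lang e ∪ lang f
  | conc e f => {w | ∃ v ∈ lang e, ∃ u ∈ lang f, w = v ++ u}
  | compl e => (lang e)ᶜ

/-- Size: number of nodes of the syntax tree. -/
def size : SF α → Nat
  | empty => 1
  | eps => 1
  | ltr _ => 1
  | union e f => 1 + size e + size f
  | conc e f => 1 + size e + size f
  | compl e => 1 + size e

end SF

/-- `tower 0 = 1`, `tower (k+1) = 2 ^ tower k`. -/
def tower : Nat → Nat
  | 0 => 1
  | k + 1 => 2 ^ tower k

namespace SFProof
open Set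

open Set

lemma tower_pos (n : ℕ) : 0 < tower n := by
  cases n with
  | zero => simp [tower]
  | succ k => exact Nat.pow_pos (by norm_num)

lemma tower_mono : Monotone tower := by
  apply monotone_nat_of_le_succ
  intro n
  show tower n ≤ 2 ^ tower n
  exact le_of_lt Nat.lt_two_pow_self

lemma tower_add_two (m n : ℕ) : tower m + tower n + 2 ≤ tower (m + n + 2) := by
  have hm : tower m ≤ tower (m + n) := tower_mono (Nat.le_add_right _ _)
  have hn : tower n ≤ tower (m + n) := tower_mono (Nat.le_add_left _ _)
  have h1 : tower m + tower n + 2 ≤ 2 * (tower (m + n) + 1) := by omega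
  have h2 : tower (m+n) + 1 ≤ 2 ^ tower (m+n) := Nat.lt_two_pow_self
  have h3 : (2:ℕ) * (tower (m+n) + 1) ≤ 2 ^ (tower (m+n) + 1) := by
    calc (2:ℕ) * (tower (m+n) + 1) ≤ 2 * 2 ^ tower (m+n) := by omega
    _ = 2 ^ (tower (m+n) + 1) := by ring
  have h4 : (2:ℕ) ^ (tower (m+n) + 1) ≤ 2 ^ (2 ^ tower (m+n)) :=
    Nat.pow_le_pow_right (by norm_num) h2
  have : tower (m + n + 2) = 2 ^ (2 ^ tower (m+n)) := by
    show (2:ℕ) ^ tower (m+n+1) = _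
    rfl
  omega

variable {α : Type*} {σ : Type*}

lemma stepSet_singleton (M : NFA α σ) (q : σ) (a : α) : M.stepSet {q} a = M.step q a := by
  simp [NFA.stepSet]

lemma evalFrom_cons (M : NFA α σ) (S : Set σ) (a : α) (w : List α) :
    M.evalFrom S (a :: w) = M.evalFrom (M.stepSet S a) w := rfl

lemma evalFrom_iUnion {ι : Type*} (M : NFA α σ) (f : ι → Set σ) (w : List α) :
    M.evalFrom (⋃ i, f i) w = ⋃ i, M.evalFrom (f i) w := by
  induction w generalizing f with
  | nil => simp
  | cons a w ih =>
      rw [evalFrom_cons]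
      have : M.stepSet (⋃ i, f i) a = ⋃ i, M.stepSet (f i) a := by
        simp [NFA.stepSet]; rw [Set.iUnion_comm]
      rw [this, ih]
      rfl

lemma mem_evalFrom_iff (M : NFA α σ) (S : Set σ) (q : σ) (w : List α) :
    q ∈ M.evalFrom S w ↔ ∃ p ∈ S, q ∈ M.evalFrom {p} w := by
  have : S = ⋃ p : S, {(p : σ)} := by simp
  conv_lhs => rw [this]
  rw [evalFrom_iUnion]
  simp

lemma evalFrom_append (M : NFA α σ) (S : Set σ) (u v : List α) :
    M.evalFrom S (u ++ v) = M.evalFrom (M.evalFrom S u) v := by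
  simp [NFA.evalFrom, List.foldl_append]

lemma mem_evalFrom_split (M : NFA α σ) (S : Set σ) (q : σ) (u v : List α) :
    q ∈ M.evalFrom S (u ++ v) ↔ ∃ p, p ∈ M.evalFrom S u ∧ q ∈ M.evalFrom {p} v := by
  rw [evalFrom_append, mem_evalFrom_iff]

lemma exists_short_word (M : NFA α σ) [Fintype σ] (h : M.accepts.Nonempty) :
    ∃ w ∈ M.accepts, w.length + 1 ≤ Fintype.card σ := by
  obtain ⟨w0, hw0⟩ := h
  have hex : ∃ n : ℕ, ∃ w ∈ M.accepts, w.length = n := ⟨w0.length, w0, hw0, rfl⟩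
  classical
  obtain ⟨w, hw, hwn⟩ := Nat.find_spec hex
  refine ⟨w, hw, ?_⟩
  by_contra hlen
  push_neg at hlen
  -- Fintype.card σ < w.length + 1, i.e. card σ ≤ w.length
  obtain ⟨qf, hqf, hqe⟩ := hw
  -- choose intermediate states
  have key : ∀ i : Fin (w.length + 1), ∃ p, p ∈ M.evalFrom M.start (w.take i) ∧
      qf ∈ M.evalFrom {p} (w.drop i) := by
    intro i
    have := (mem_evalFrom_split M M.start qf (w.take i) (w.drop i))
    rw [List.take_append_drop] at this
    exact this.mp hqe
  choose g hg1 hg2 using key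
  obtain ⟨i, j, hij, hgij⟩ := Fintype.exists_ne_map_eq_of_card_lt g (by
    simpa using hlen)
  have cut : ∀ i j : Fin (w.length + 1), i < j → g i = g j → False := by
    intro i j hlt hgij
    set w' : List α := w.take i ++ w.drop j with hw'
    have hmem : w' ∈ M.accepts := by
      refine ⟨qf, hqf, ?_⟩
      rw [NFA.eval, mem_evalFrom_split]
      exact ⟨g i, hg1 i, by rw [hgij]; exact hg2 j⟩
    have hlen' : w'.length < w.length := by
      have hi : (i : ℕ) < j := hlt
      have hj : (j : ℕ) ≤ w.length := Nat.lt_succ_iff.mp j.isLt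
      simp only [hw', List.length_append, List.length_take, List.length_drop]
      omega
    have := Nat.find_min hex (m := w'.length) (by omega)
    exact this ⟨w', hmem, rfl⟩
  rcases (Ne.lt_or_gt hij) with hlt | hlt
  · exact cut i j hlt hgij
  · exact cut j i hlt hgij.symm


lemma mem_accepts' (M : NFA α σ) (q0 : σ) (h : M.start = {q0}) (w : List α) :
    w ∈ M.accepts ↔ ∃ f ∈ M.accept, f ∈ M.evalFrom {q0} w := by
  rw [NFA.mem_accepts, h]

lemma evalFrom_empty (M : NFA α σ) (w : List α) : M.evalFrom ∅ w = ∅ := by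
  induction w with
  | nil => rfl
  | cons a w ih => rw [evalFrom_cons]; simpa using ih

variable {σ1 σ2 : Type*}

/-- Union NFA with a fresh single start state. -/
def NU (M1 : NFA α σ1) (M2 : NFA α σ2) (q01 : σ1) (q02 : σ2) :
    NFA α (Option (σ1 ⊕ σ2)) where
  step := fun s x => match s with
    | none => (some ∘ Sum.inl) '' M1.step q01 x ∪ (some ∘ Sum.inr) '' M2.step q02 x
    | some (Sum.inl p) => (some ∘ Sum.inl) '' M1.step p x
    | some (Sum.inr p) => (some ∘ Sum.inr) '' M2.step p x
  start := {none}
  accept := (some ∘ Sum.inl) '' M1.accept ∪ (some ∘ Sum.inr) '' M2.accept ∪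
    {s | s = none ∧ (q01 ∈ M1.accept ∨ q02 ∈ M2.accept)}

lemma NU_stepSet (M1 : NFA α σ1) (M2 : NFA α σ2) (q01 : σ1) (q02 : σ2)
    (S : Set σ1) (T : Set σ2) (a : α) :
    (NU M1 M2 q01 q02).stepSet ((some ∘ Sum.inl) '' S ∪ (some ∘ Sum.inr) '' T) a =
      (some ∘ Sum.inl) '' M1.stepSet S a ∪ (some ∘ Sum.inr) '' M2.stepSet T a := by
  ext q
  simp only [NFA.mem_stepSet, Set.mem_union, Set.mem_image, Function.comp_apply, NU]
  constructor
  · rintro ⟨t, (⟨p, hp, rfl⟩ | ⟨p, hp, rfl⟩), hq⟩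
    · rcases hq with ⟨r, hr, rfl⟩
      exact Or.inl ⟨r, ⟨p, hp, hr⟩, rfl⟩
    · rcases hq with ⟨r, hr, rfl⟩
      exact Or.inr ⟨r, ⟨p, hp, hr⟩, rfl⟩
  · rintro (⟨r, ⟨p, hp, hr⟩, rfl⟩ | ⟨r, ⟨p, hp, hr⟩, rfl⟩)
    · exact ⟨some (Sum.inl p), Or.inl ⟨p, hp, rfl⟩, ⟨r, hr, rfl⟩⟩
    · exact ⟨some (Sum.inr p), Or.inr ⟨p, hp, rfl⟩, ⟨r, hr, rfl⟩⟩

lemma NU_evalFrom (M1 : NFA α σ1) (M2 : NFA α σ2) (q01 : σ1) (q02 : σ2)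
    (w : List α) (S : Set σ1) (T : Set σ2) :
    (NU M1 M2 q01 q02).evalFrom ((some ∘ Sum.inl) '' S ∪ (some ∘ Sum.inr) '' T) w =
      (some ∘ Sum.inl) '' M1.evalFrom S w ∪ (some ∘ Sum.inr) '' M2.evalFrom T w := by
  induction w generalizing S T with
  | nil => rfl
  | cons a w ih => rw [evalFrom_cons, NU_stepSet, ih]; rfl

lemma NU_accepts (M1 : NFA α σ1) (M2 : NFA α σ2) (q01 : σ1) (q02 : σ2)
    (h1 : M1.start = {q01}) (h2 : M2.start = {q02}) :
    (NU M1 M2 q01 q02).accepts = {w | w ∈ M1.accepts ∨ w ∈ M2.accepts} := by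
  ext w
  show _ ↔ w ∈ M1.accepts ∨ w ∈ M2.accepts
  cases w with
  | nil =>
      simp only [NFA.mem_accepts, NFA.eval_nil, h1, h2]
      constructor
      · rintro ⟨s, hs, hmem⟩
        have : s = none := by
          simpa [NU] using hmem
        subst this
        rcases hs with (⟨p, hp, hps⟩ | ⟨p, hp, hps⟩) | ⟨-, h⟩
        · exact absurd hps (by simp)
        · exact absurd hps (by simp)
        · rcases h with h | h
          · exact Or.inl ⟨q01, h, rfl⟩
          · exact Or.inr ⟨q02, h, rfl⟩
      · rintro (⟨s, hs, hmem⟩ | ⟨s, hs, hmem⟩)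
        · have hq : s = q01 := hmem
          subst hq
          exact ⟨none, Or.inr ⟨rfl, Or.inl hs⟩, by simp [NU]⟩
        · have hq : s = q02 := hmem
          subst hq
          exact ⟨none, Or.inr ⟨rfl, Or.inr hs⟩, by simp [NU]⟩
  | cons a w =>
      have hstart : (NU M1 M2 q01 q02).start = {none} := rfl
      have hstep : (NU M1 M2 q01 q02).stepSet {none} a =
          (some ∘ Sum.inl) '' M1.step q01 a ∪ (some ∘ Sum.inr) '' M2.step q02 a := by
        rw [stepSet_singleton]; rfl
      simp only [NFA.mem_accepts, NFA.eval, hstart, h1, h2]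
      rw [evalFrom_cons, hstep, NU_evalFrom]
      rw [evalFrom_cons, stepSet_singleton, evalFrom_cons (M := M2), stepSet_singleton]
      show (∃ s ∈ (NU M1 M2 q01 q02).accept, s ∈ _ ∪ _) ↔ _
      simp only [NU, Set.mem_union, Set.mem_image, Set.mem_setOf_eq, Function.comp_apply]
      constructor
      · rintro ⟨s, hs, hev⟩
        rcases hev with ⟨p, hp, rfl⟩ | ⟨p, hp, rfl⟩
        · rcases hs with (⟨r, hr, hrs⟩ | ⟨r, hr, hrs⟩) | ⟨hnone, -⟩
          · exact Or.inl ⟨p, (by simpa using hrs : r = p) ▸ hr, hp⟩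
          · exact absurd hrs (by simp)
          · exact absurd hnone (by simp)
        · rcases hs with (⟨r, hr, hrs⟩ | ⟨r, hr, hrs⟩) | ⟨hnone, -⟩
          · exact absurd hrs (by simp)
          · exact Or.inr ⟨p, (by simpa using hrs : r = p) ▸ hr, hp⟩
          · exact absurd hnone (by simp)
      · rintro (⟨p, hp, hpe⟩ | ⟨p, hp, hpe⟩)
        · exact ⟨some (Sum.inl p), Or.inl (Or.inl ⟨p, hp, rfl⟩), Or.inl ⟨p, hpe, rfl⟩⟩
        · exact ⟨some (Sum.inr p), Or.inl (Or.inr ⟨p, hp, rfl⟩), Or.inr ⟨p, hpe, rfl⟩⟩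


/-- Concatenation NFA. -/
def NC (M1 : NFA α σ1) (M2 : NFA α σ2) (q01 : σ1) (q02 : σ2) : NFA α (σ1 ⊕ σ2) where
  step := fun s x => match s with
    | Sum.inl p => Sum.inl '' M1.step p x ∪
        {s' | p ∈ M1.accept ∧ s' ∈ Sum.inr '' M2.step q02 x}
    | Sum.inr q => Sum.inr '' M2.step q x
  start := {Sum.inl q01}
  accept := Sum.inr '' M2.accept ∪ {s | q02 ∈ M2.accept ∧ s ∈ Sum.inl '' M1.accept}

/-- The "second phase" state set after reading `w`. -/
def Bset (M1 : NFA α σ1) (M2 : NFA α σ2) (q01 : σ1) (q02 : σ2) (w : List α) : Set σ2 :=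
  {q | ∃ u v, w = u ++ v ∧ v ≠ [] ∧ (∃ f ∈ M1.accept, f ∈ M1.evalFrom {q01} u) ∧
    q ∈ M2.evalFrom {q02} v}

lemma NC_stepSet (M1 : NFA α σ1) (M2 : NFA α σ2) (q01 : σ1) (q02 : σ2)
    (A : Set σ1) (B : Set σ2) (a : α) :
    (NC M1 M2 q01 q02).stepSet (Sum.inl '' A ∪ Sum.inr '' B) a =
      Sum.inl '' M1.stepSet A a ∪
      Sum.inr '' (M2.stepSet B a ∪ {q | (∃ p ∈ A, p ∈ M1.accept) ∧ q ∈ M2.step q02 a}) := by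
  ext s
  simp only [NFA.mem_stepSet, Set.mem_union, Set.mem_image, Set.mem_setOf_eq, NC]
  constructor
  · rintro ⟨t, (⟨p, hp, rfl⟩ | ⟨q, hq, rfl⟩), hs⟩
    · rcases hs with ⟨r, hr, rfl⟩ | ⟨hacc, ⟨r, hr, rfl⟩⟩
      · exact Or.inl ⟨r, ⟨p, hp, hr⟩, rfl⟩
      · exact Or.inr ⟨r, Or.inr ⟨⟨p, hp, hacc⟩, hr⟩, rfl⟩
    · rcases hs with ⟨r, hr, rfl⟩
      exact Or.inr ⟨r, Or.inl ⟨q, hq, hr⟩, rfl⟩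
  · rintro (⟨r, ⟨p, hp, hr⟩, rfl⟩ | ⟨r, hr | ⟨⟨p, hp, hacc⟩, hr⟩, rfl⟩)
    · exact ⟨Sum.inl p, Or.inl ⟨p, hp, rfl⟩, Or.inl ⟨r, hr, rfl⟩⟩
    · rcases hr with ⟨q, hq, hqr⟩
      exact ⟨Sum.inr q, Or.inr ⟨q, hq, rfl⟩, ⟨r, hqr, rfl⟩⟩
    · exact ⟨Sum.inl p, Or.inl ⟨p, hp, rfl⟩, Or.inr ⟨hacc, ⟨r, hr, rfl⟩⟩⟩

lemma append_singleton_eq (w u v : List α) (a : α) (h : w ++ [a] = u ++ v) (hv : v ≠ []) :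
    ∃ v', v = v' ++ [a] ∧ w = u ++ v' := by
  obtain ⟨v', b, rfl⟩ : ∃ v' b, v = v' ++ [b] :=
    ⟨v.dropLast, v.getLast hv, (List.dropLast_append_getLast hv).symm⟩
  rw [← List.append_assoc] at h
  obtain ⟨h1, h2⟩ := List.append_inj' h rfl
  obtain rfl : a = b := by simpa using h2
  exact ⟨v', rfl, h1⟩

lemma Bset_append (M1 : NFA α σ1) (M2 : NFA α σ2) (q01 : σ1) (q02 : σ2) (w : List α) (a : α) :
    Bset M1 M2 q01 q02 (w ++ [a]) =
      M2.stepSet (Bset M1 M2 q01 q02 w) a ∪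
      {q | (∃ p ∈ M1.evalFrom {q01} w, p ∈ M1.accept) ∧ q ∈ M2.step q02 a} := by
  ext q
  simp only [Bset, Set.mem_union, Set.mem_setOf_eq, NFA.mem_stepSet]
  constructor
  · rintro ⟨u, v, heq, hv, hacc, hq⟩
    obtain ⟨v', rfl, rfl⟩ := append_singleton_eq w u v a heq hv
    rcases eq_or_ne v' [] with rfl | hv'
    · refine Or.inr ⟨?_, ?_⟩
      · obtain ⟨f, hf, hfe⟩ := hacc
        exact ⟨f, by simpa using hfe, hf⟩
      · simpa [evalFrom_cons, stepSet_singleton] using hq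
    · refine Or.inl ?_
      have : q ∈ M2.stepSet (M2.evalFrom {q02} v') a := by
        have := hq
        rwa [show v' ++ [a] = v' ++ [a] from rfl, NFA.evalFrom_append, NFA.evalFrom_singleton] at this
      rw [NFA.mem_stepSet] at this
      obtain ⟨t, ht, hta⟩ := this
      exact ⟨t, ⟨u, v', rfl, hv', hacc, ht⟩, hta⟩
  · rintro (⟨t, ⟨u, v, rfl, hv, hacc, ht⟩, hta⟩ | ⟨⟨p, hp, hpacc⟩, hq⟩)
    · refine ⟨u, v ++ [a], by simp, by simp, hacc, ?_⟩
      rw [NFA.evalFrom_append, NFA.evalFrom_singleton, NFA.mem_stepSet]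
      exact ⟨t, ht, hta⟩
    · refine ⟨w, [a], rfl, by simp, ⟨p, hpacc, hp⟩, ?_⟩
      simpa [stepSet_singleton] using hq

lemma NC_eval (M1 : NFA α σ1) (M2 : NFA α σ2) (q01 : σ1) (q02 : σ2) (w : List α) :
    (NC M1 M2 q01 q02).evalFrom {Sum.inl q01} w =
      Sum.inl '' M1.evalFrom {q01} w ∪ Sum.inr '' Bset M1 M2 q01 q02 w := by
  induction w using List.reverseRecOn with
  | nil =>
      have : Bset M1 M2 q01 q02 [] = ∅ := by
        ext q; simp only [Bset, Set.mem_setOf_eq, Set.mem_empty_iff_false, iff_false]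
        rintro ⟨u, v, heq, hv, -⟩
        exact hv (List.append_eq_nil_iff.mp heq.symm).2
      simp [this]
  | append_singleton w a ih =>
      rw [NFA.evalFrom_append, NFA.evalFrom_singleton, ih, NC_stepSet, Bset_append,
        NFA.evalFrom_append, NFA.evalFrom_singleton]

lemma NC_accepts (M1 : NFA α σ1) (M2 : NFA α σ2) (q01 : σ1) (q02 : σ2)
    (h1 : M1.start = {q01}) (h2 : M2.start = {q02}) :
    (NC M1 M2 q01 q02).accepts =
      {w | ∃ u ∈ M1.accepts, ∃ v ∈ M2.accepts, w = u ++ v} := by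
  ext w
  show _ ↔ _
  rw [mem_accepts' _ (Sum.inl q01) rfl, NC_eval]
  constructor
  · rintro ⟨s, hs, hev⟩
    rcases hev with ⟨p, hp, rfl⟩ | ⟨q, hq, rfl⟩
    · rcases hs with ⟨r, hr, hrs⟩ | ⟨hq02, ⟨r, hr, hrs⟩⟩
      · exact absurd hrs (by simp)
      · have hrp : r = p := by simpa using hrs
        refine ⟨w, (mem_accepts' M1 q01 h1 w).mpr ⟨p, hrp ▸ hr, hp⟩, [],
          (mem_accepts' M2 q02 h2 []).mpr ⟨q02, hq02, rfl⟩, by simp⟩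
    · rcases hs with ⟨r, hr, hrs⟩ | ⟨hq02, ⟨r, hr, hrs⟩⟩
      · have hrq : r = q := by simpa using hrs
        obtain ⟨u, v, rfl, hv, ⟨f, hf, hfe⟩, hqe⟩ := hq
        exact ⟨u, (mem_accepts' M1 q01 h1 u).mpr ⟨f, hf, hfe⟩, v,
          (mem_accepts' M2 q02 h2 v).mpr ⟨q, hrq ▸ hr, hqe⟩, rfl⟩
      · exact absurd hrs (by simp)
  · rintro ⟨u, hu, v, hv, rfl⟩
    obtain ⟨f1, hf1, hf1e⟩ := (mem_accepts' M1 q01 h1 u).mp hu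
    obtain ⟨f2, hf2, hf2e⟩ := (mem_accepts' M2 q02 h2 v).mp hv
    rcases eq_or_ne v [] with rfl | hvne
    · refine ⟨Sum.inl f1, Or.inr ⟨?_, ⟨f1, hf1, rfl⟩⟩, Or.inl ⟨f1, by simpa using hf1e, rfl⟩⟩
      have : f2 = q02 := by simpa using hf2e
      exact this ▸ hf2
    · refine ⟨Sum.inr f2, Or.inl ⟨f2, hf2, rfl⟩, Or.inr ⟨f2, ?_, rfl⟩⟩
      exact ⟨u, v, rfl, hvne, ⟨f1, hf1, hf1e⟩, hf2e⟩


variable {σ1 : Type*}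

def emb (q01 : σ1) : Set {q : σ1 // q ≠ q01} → Set σ1 := fun S => Subtype.val '' S
def res (q01 : σ1) : Set σ1 → Set {q : σ1 // q ≠ q01} := fun T => {q | ↑q ∈ T}

lemma res_emb (q01 : σ1) (S : Set {q : σ1 // q ≠ q01}) : res q01 (emb q01 S) = S := by
  ext ⟨q, hq⟩
  simp only [res, emb, Set.mem_setOf_eq, Set.mem_image]
  constructor
  · rintro ⟨p, hp, hpq⟩
    have : p = ⟨q, hq⟩ := Subtype.ext hpq
    exact this ▸ hp
  · intro h
    exact ⟨⟨q, hq⟩, h, rfl⟩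

lemma emb_res (q01 : σ1) (T : Set σ1) (h : q01 ∉ T) : emb q01 (res q01 T) = T := by
  ext x
  simp only [emb, res, Set.mem_image, Set.mem_setOf_eq]
  constructor
  · rintro ⟨q, hq, rfl⟩; exact hq
  · intro hx
    exact ⟨⟨x, fun hxq => h (hxq ▸ hx)⟩, hx, rfl⟩

/-- Complement NFA (deterministic, via subset construction avoiding the start state). -/
def NK (M1 : NFA α σ1) (q01 : σ1) : NFA α (Option (Set {q : σ1 // q ≠ q01})) where
  step := fun s a => match s with
    | none => {some (res q01 (M1.step q01 a))}
    | some S => {some (res q01 (M1.stepSet (emb q01 S) a))}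
  start := {none}
  accept := {s | ∀ f ∈ M1.accept, f ∉ (match s with
    | none => ({q01} : Set σ1)
    | some S => emb q01 S)}

lemma not_mem_stepSet (M1 : NFA α σ1) (q01 : σ1) (hni : ∀ p a, q01 ∉ M1.step p a)
    (S : Set σ1) (a : α) : q01 ∉ M1.stepSet S a := by
  rw [NFA.mem_stepSet]
  rintro ⟨t, -, ht⟩
  exact hni t a ht

lemma NK_evalFrom (M1 : NFA α σ1) (q01 : σ1) (hni : ∀ p a, q01 ∉ M1.step p a)
    (w : List α) (S : Set {q : σ1 // q ≠ q01}) :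
    (NK M1 q01).evalFrom {some S} w = {some (res q01 (M1.evalFrom (emb q01 S) w))} := by
  induction w generalizing S with
  | nil => rw [NFA.evalFrom_nil, NFA.evalFrom_nil, res_emb]
  | cons a w ih =>
      rw [evalFrom_cons, stepSet_singleton]
      show (NK M1 q01).evalFrom {some (res q01 (M1.stepSet (emb q01 S) a))} w = _
      rw [ih, emb_res _ _ (not_mem_stepSet M1 q01 hni _ _)]
      rfl

lemma not_mem_evalFrom (M1 : NFA α σ1) (q01 : σ1) (hni : ∀ p a, q01 ∉ M1.step p a)
    (w : List α) (T : Set σ1) (h : q01 ∉ T) : q01 ∉ M1.evalFrom T w := by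
  induction w generalizing T with
  | nil => exact h
  | cons a w ih => exact ih _ (not_mem_stepSet M1 q01 hni _ _)

lemma NK_accepts (M1 : NFA α σ1) (q01 : σ1) (h1 : M1.start = {q01})
    (hni : ∀ p a, q01 ∉ M1.step p a) :
    (NK M1 q01).accepts = {w | w ∉ M1.accepts} := by
  ext w
  show _ ↔ w ∉ M1.accepts
  rw [mem_accepts' _ none rfl, mem_accepts' M1 q01 h1]
  cases w with
  | nil =>
      simp only [NFA.evalFrom_nil]
      constructor
      · rintro ⟨f, hf, hfe⟩ hmem
        obtain ⟨g, hg, hge⟩ := hmem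
        have : f = none := hfe
        subst this
        exact hf g hg hge
      · intro h
        refine ⟨none, ?_, rfl⟩
        intro f hf hfe
        exact h ⟨f, hf, hfe⟩
  | cons a w =>
      have e1 : (NK M1 q01).evalFrom {none} (a :: w) =
          {some (res q01 (M1.evalFrom (M1.step q01 a) w))} := by
        rw [evalFrom_cons, stepSet_singleton]
        show (NK M1 q01).evalFrom {some (res q01 (M1.step q01 a))} w = _
        rw [NK_evalFrom M1 q01 hni, emb_res _ _ (hni q01 a)]
      have e2 : M1.evalFrom {q01} (a :: w) = M1.evalFrom (M1.step q01 a) w := by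
        rw [evalFrom_cons, stepSet_singleton]
      rw [e1, e2]
      have hT : q01 ∉ M1.evalFrom (M1.step q01 a) w :=
        not_mem_evalFrom M1 q01 hni w _ (hni q01 a)
      constructor
      · rintro ⟨f, hf, hfe⟩ hmem
        obtain ⟨g, hg, hge⟩ := hmem
        have : f = some (res q01 (M1.evalFrom (M1.step q01 a) w)) := hfe
        subst this
        have h3 : g ∉ emb q01 (res q01 (M1.evalFrom (M1.step q01 a) w)) := hf g hg
        rw [emb_res _ _ hT] at h3
        exact h3 hge
      · intro h
        refine ⟨some (res q01 (M1.evalFrom (M1.step q01 a) w)), ?_, rfl⟩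
        intro f hf hfe
        have hfe' : f ∈ emb q01 (res q01 (M1.evalFrom (M1.step q01 a) w)) := hfe
        rw [emb_res _ _ hT] at hfe'
        exact h ⟨f, hf, hfe'⟩


lemma size_pos (E : SF α) : 1 ≤ E.size := by
  cases E <;> simp [SF.size] <;> omega

lemma buildNFA (E : SF α) :
    ∃ (σ : Type) (_ : Fintype σ) (M : NFA α σ) (q0 : σ),
      M.start = {q0} ∧ (∀ p a, q0 ∉ M.step p a) ∧
      Fintype.card σ ≤ tower (E.size - 1) + 1 ∧
      ∀ w : List α, w ∈ M.accepts ↔ w ∈ E.lang := by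
  induction E with
  | empty =>
      refine ⟨Unit, inferInstance, ⟨fun _ _ => ∅, {()}, ∅⟩, (), rfl,
        fun p a h => h, by simp [SF.size, tower], fun w => ?_⟩
      rw [NFA.mem_accepts]
      simp [SF.lang]
  | eps =>
      refine ⟨Unit, inferInstance, ⟨fun _ _ => ∅, {()}, {()}⟩, (), rfl,
        fun p a h => h, by simp [SF.size, tower], fun w => ?_⟩
      rw [mem_accepts' _ () rfl]
      cases w with
      | nil => simp [SF.lang]
      | cons a w =>
          rw [evalFrom_cons]
          have : (⟨fun _ _ => ∅, {()}, {()}⟩ : NFA α Unit).stepSet {()} a = ∅ := by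
            rw [stepSet_singleton]
          rw [this, evalFrom_empty]
          simp [SF.lang]
  | ltr a =>
      refine ⟨Bool, inferInstance,
        ⟨fun p x => {q | p = false ∧ x = a ∧ q = true}, {false}, {q | q = true}⟩, false, rfl,
        ?_, by simp [SF.size, tower], fun w => ?_⟩
      · rintro p x ⟨-, -, h⟩
        exact Bool.false_ne_true h
      · rw [mem_accepts' _ false rfl]
        match w with
        | [] =>
            simp only [NFA.evalFrom_nil]
            constructor
            · rintro ⟨f, hf, hfe⟩
              have h1 : f = true := hf
              have h2 : f = false := hfe
              simp [h1] at h2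
            · intro h
              exact absurd h (by simp [SF.lang])
        | [x] =>
            rw [show ([x] : List α) = [] ++ [x] from rfl, NFA.evalFrom_append, NFA.evalFrom_singleton,
              NFA.evalFrom_nil, stepSet_singleton]
            constructor
            · rintro ⟨f, hf, -, hxa, -⟩
              show [x] ∈ ({[a]} : Set (List α))
              simp [hxa]
            · intro h
              have : x = a := by simpa [SF.lang] using h
              exact ⟨true, rfl, rfl, this, rfl⟩
        | x :: y :: t =>
            rw [evalFrom_cons, stepSet_singleton, evalFrom_cons]
            have hss : (⟨fun p x => {q | p = false ∧ x = a ∧ q = true}, {false},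
                {q | q = true}⟩ : NFA α Bool).stepSet
                ((⟨fun p x => {q | p = false ∧ x = a ∧ q = true}, {false},
                {q | q = true}⟩ : NFA α Bool).step false x) y = ∅ := by
              ext q
              rw [NFA.mem_stepSet]
              simp only [Set.mem_empty_iff_false, iff_false]
              rintro ⟨t', ht', hq⟩
              have hh1 : t' = true := ht'.2.2
              have hh2 : t' = false := hq.1
              rw [hh1] at hh2
              exact Bool.noConfusion hh2
            rw [hss, evalFrom_empty]
            simp [SF.lang]
  | union e f ih1 ih2 =>
      obtain ⟨σ1, i1, M1, q01, hs1, hn1, hc1, hl1⟩ := ih1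
      obtain ⟨σ2, i2, M2, q02, hs2, hn2, hc2, hl2⟩ := ih2
      refine ⟨Option (σ1 ⊕ σ2), inferInstance, NU M1 M2 q01 q02, none, rfl, ?_, ?_, fun w => ?_⟩
      · rintro p a h
        rcases p with _ | (p | p)
        · rcases h with ⟨r, -, hr⟩ | ⟨r, -, hr⟩ <;> exact absurd hr (by simp)
        · rcases h with ⟨r, -, hr⟩; exact absurd hr (by simp)
        · rcases h with ⟨r, -, hr⟩; exact absurd hr (by simp)
      · have h1 := size_pos e
        have h2 := size_pos f
        have key := tower_add_two (e.size - 1) (f.size - 1)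
        have heq : e.size - 1 + (f.size - 1) + 2 = e.size + f.size := by omega
        rw [heq] at key
        have hcard : Fintype.card (Option (σ1 ⊕ σ2)) = Fintype.card σ1 + Fintype.card σ2 + 1 := by
          simp [Fintype.card_option, Fintype.card_sum]
        have hsz : (SF.union e f).size - 1 = e.size + f.size := by
          simp [SF.size]; omega
        rw [hsz, hcard]
        omega
      · rw [NU_accepts M1 M2 q01 q02 hs1 hs2]
        show (w ∈ M1.accepts ∨ w ∈ M2.accepts) ↔ _
        rw [hl1 w, hl2 w]
        rfl
  | conc e f ih1 ih2 =>
      obtain ⟨σ1, i1, M1, q01, hs1, hn1, hc1, hl1⟩ := ih1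
      obtain ⟨σ2, i2, M2, q02, hs2, hn2, hc2, hl2⟩ := ih2
      refine ⟨σ1 ⊕ σ2, inferInstance, NC M1 M2 q01 q02, Sum.inl q01, rfl, ?_, ?_, fun w => ?_⟩
      · rintro p a h
        rcases p with p | p
        · rcases h with ⟨r, hr, hre⟩ | ⟨-, r, -, hre⟩
          · obtain rfl : r = q01 := by simpa using hre
            exact hn1 p a hr
          · exact absurd hre (by simp)
        · rcases h with ⟨r, -, hre⟩
          exact absurd hre (by simp)
      · have h1 := size_pos e
        have h2 := size_pos f
        have key := tower_add_two (e.size - 1) (f.size - 1)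
        have heq : e.size - 1 + (f.size - 1) + 2 = e.size + f.size := by omega
        rw [heq] at key
        have hcard : Fintype.card (σ1 ⊕ σ2) = Fintype.card σ1 + Fintype.card σ2 := by
          simp [Fintype.card_sum]
        have hsz : (SF.conc e f).size - 1 = e.size + f.size := by
          simp [SF.size]; omega
        rw [hsz, hcard]
        omega
      · rw [NC_accepts M1 M2 q01 q02 hs1 hs2]
        show (∃ u ∈ M1.accepts, ∃ v ∈ M2.accepts, w = u ++ v) ↔ _
        show _ ↔ ∃ v ∈ e.lang, ∃ u ∈ f.lang, w = v ++ u
        constructor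
        · rintro ⟨u, hu, v, hv, rfl⟩
          exact ⟨u, (hl1 u).mp hu, v, (hl2 v).mp hv, rfl⟩
        · rintro ⟨u, hu, v, hv, rfl⟩
          exact ⟨u, (hl1 u).mpr hu, v, (hl2 v).mpr hv, rfl⟩
  | compl e ih =>
      obtain ⟨σ1, i1, M1, q01, hs1, hn1, hc1, hl1⟩ := ih
      classical
      refine ⟨Option (Set {q : σ1 // q ≠ q01}), inferInstance, NK M1 q01, none, rfl,
        ?_, ?_, fun w => ?_⟩
      · rintro p a h
        rcases p with _ | S <;> exact absurd h (by simp [NK])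
      · have h1 := size_pos e
        have hcard : Fintype.card (Option (Set {q : σ1 // q ≠ q01})) =
            2 ^ Fintype.card {q : σ1 // q ≠ q01} + 1 := by
          simp [Fintype.card_option, Fintype.card_set]
        have hlt : Fintype.card {q : σ1 // q ≠ q01} < Fintype.card σ1 :=
          Fintype.card_subtype_lt (x := q01) (by simp)
        have hsub : Fintype.card {q : σ1 // q ≠ q01} ≤ tower (e.size - 1) := by omega
        have hpow : (2:ℕ) ^ Fintype.card {q : σ1 // q ≠ q01} ≤ 2 ^ tower (e.size - 1) :=
          Nat.pow_le_pow_right (by norm_num) hsub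
        have hsz : (SF.compl e).size - 1 = e.size := by simp [SF.size]
        have htow : tower e.size = 2 ^ tower (e.size - 1) := by
          obtain ⟨m, hm⟩ : ∃ m, e.size = m + 1 := ⟨e.size - 1, by omega⟩
          rw [hm]
          simp [tower]
        rw [hsz, hcard, htow]
        omega
      · rw [NK_accepts M1 q01 hs1 hn1]
        show (w ∉ M1.accepts) ↔ _
        rw [hl1 w]
        rfl

end SFProof

/-- if a star-free expression of size `n + 1` over a finite
alphabet denotes a non-empty language, then that language contains a word of
length at most `tower n`. -/
theorem sf_nonempty_short_word {α : Type*} [Fintype α] (E : SF α) (n : Nat)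
    (hsize : E.size = n + 1) (hne : E.lang.Nonempty) :
    ∃ w ∈ E.lang, w.length ≤ tower n := by
  obtain ⟨σ, iσ, M, q0, hs, hni, hcard, hl⟩ := SFProof.buildNFA E
  haveI := iσ
  have hne' : M.accepts.Nonempty := by
    obtain ⟨w, hw⟩ := hne
    exact ⟨w, (hl w).mpr hw⟩
  obtain ⟨w, hw, hlen⟩ := @SFProof.exists_short_word _ _ M iσ hne'
  refine ⟨w, (hl w).mp hw, ?_⟩
  have hn : E.size - 1 = n := by omega
  rw [hn] at hcard
  omega
end

section
/- Define the sequence of string functions f₀(x) = x and f_{n+1}(x) = x · f_n(c₁x) · ... · f_n(c_k x) over an alphabet Σ ∪ {#} with Σ = {c₁, ..., c_k}. Then for every n ∈ ℕ, the string f_n(#) contains, as factors between consecutive # symbols (and before the first and after the last #), every word over Σ of length at most n. -/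
/-- Strings over `Σ ∪ {#}` with `Σ = Fin k`: the separator `#` is `none`,
letters are `some c`. The sequence `f₀(x) = x`,
`f_{n+1}(x) = x · f_n(c₁x) · ... · f_n(cₖx)`. -/
def fSeq (k : Nat) : Nat → List (Option (Fin k)) → List (Option (Fin k))
  | 0, x => x
  | n + 1, x => x ++ (List.ofFn fun c : Fin k => fSeq k n (some c :: x)).flatten

/-- The list of words appearing between separators. -/
def gSeq (k : Nat) : Nat → List (Fin k) → List (List (Fin k))
  | 0, s => [s]
  | n + 1, s => s :: (List.ofFn fun c : Fin k => gSeq k n (c :: s)).flatten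

lemma fSeq_eq (k n : Nat) : ∀ s : List (Fin k),
    fSeq k n (s.map some ++ [none]) =
      ((gSeq k n s).map (fun w => w.map some ++ [none])).flatten := by
  induction n with
  | zero => intro s; simp [fSeq, gSeq]
  | succ n ih =>
    intro s
    simp only [fSeq, gSeq, List.map_cons, List.flatten_cons]
    have : (fun c : Fin k => fSeq k n (some c :: (s.map some ++ [none])))
        = fun c : Fin k =>
          ((gSeq k n (c :: s)).map (fun w => w.map some ++ [none])).flatten := by
      funext c
      rw [← ih (c :: s)]
      rfl
    rw [this]
    simp [List.map_flatten, List.flatten_flatten, List.map_map, List.map_ofFn,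
      Function.comp_def, List.append_assoc]

lemma splitOn_sepfree {α : Type*} [BEq α] [LawfulBEq α] (sep : α) :
    ∀ (a : List α), sep ∉ a → ∀ rest : List α,
      (a ++ sep :: rest).splitOn sep = a :: rest.splitOn sep := by
  intro a
  induction a with
  | nil => intro _ rest; simp [List.splitOn, List.splitOnP_cons]
  | cons x xs ih =>
    intro h rest
    have hx : x ≠ sep := fun hc => h (hc ▸ (List.mem_cons_self : x ∈ x :: xs))
    have hxs : sep ∉ xs := fun hc => h (List.mem_cons_of_mem x hc)
    simp only [List.cons_append, List.splitOn, List.splitOnP_cons]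
    rw [if_neg (by simp [hx])]
    have := ih hxs rest
    simp only [List.splitOn] at this
    rw [this]
    rfl

lemma splitOn_chunks (k : Nat) :
    ∀ L : List (List (Fin k)),
      ((L.map (fun w => w.map some ++ [none])).flatten).splitOn none
        = L.map (fun w => w.map some) ++ [[]] := by
  intro L
  induction L with
  | nil => simp [List.splitOn]
  | cons w L ih =>
    simp only [List.map_cons, List.flatten_cons, List.append_assoc, List.singleton_append]
    rw [splitOn_sepfree none (w.map some) (by simp)]
    rw [ih]
    rfl

lemma mem_gSeq (k : Nat) : ∀ n : Nat, ∀ u v : List (Fin k),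
    u.length ≤ n → u ++ v ∈ gSeq k n v := by
  intro n
  induction n with
  | zero =>
    intro u v hu
    rw [List.length_eq_zero_iff.mp (Nat.le_zero.mp hu)]
    simp [gSeq]
  | succ n ih =>
    intro u v hu
    rcases u.eq_nil_or_concat with rfl | ⟨u', c, rfl⟩
    · simp [gSeq]
    · have hlen : u'.length ≤ n := by
        simp [List.concat_eq_append] at hu; omega
      have hm := ih u' (c :: v) hlen
      simp only [gSeq, List.mem_cons]
      right
      rw [List.mem_flatten]
      refine ⟨gSeq k n (c :: v), ?_, ?_⟩
      · rw [List.mem_ofFn]; exact ⟨c, rfl⟩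
      · simpa [List.concat_eq_append, List.append_assoc] using hm

/-- for every `n`, every word `w` over `Σ` of length at most `n`
occurs as an entry of the `#`-separated list encoded by `f_n(#)`, i.e. as a
maximal `#`-free factor of `f_n(#)`. -/
theorem fSeq_contains_all_short_words (k n : Nat) (w : List (Fin k))
    (hw : w.length ≤ n) : w.map some ∈ (fSeq k n [none]).splitOn none := by
  have h0 : ([none] : List (Option (Fin k))) = ([] : List (Fin k)).map some ++ [none] := rfl
  rw [h0, fSeq_eq, splitOn_chunks]
  have hmem : w ∈ gSeq k n [] := by simpa using mem_gSeq k n w [] hw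
  exact List.mem_append_left _ (List.mem_map_of_mem hmem)
end
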